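/- There exists a complete transfer operator for (A, δ) if and only if there exists a non-degenerate transfer operator for (A, δ) and δ(A) is a hereditary subalgebra of A (equivalently, δ(A) = {δ(1)·a·δ(1) : a ∈ A}). -/

import Mathlib

/-- A (not necessarily unital) *-algebra endomorphism of a unital C*-algebra:
a linear, multiplicative, star-preserving map. -/
def IsEndomorphism {A : Type*} [CStarAlgebra A] (δ : A → A) : Prop :=
  IsLinearMap ℂ δ ∧ (∀ a b, δ (a * b) = δ a * δ b) ∧ (∀ a, δ (star a) = star (δ a))

/-- A transfer operator for `(A, δ)`: a continuous positive linear map `δs`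
satisfying `δs (δ a * b) = a * δs b`. -/
def IsTransferOperator {A : Type*} [CStarAlgebra A] [PartialOrder A] [StarOrderedRing A]
    (δ δs : A → A) : Prop :=
  Continuous δs ∧ IsLinearMap ℂ δs ∧ (∀ a, 0 ≤ a → 0 ≤ δs a) ∧
    ∀ a b, δs (δ a * b) = a * δs b

/-- If `p` is a projection, `b` lies in the corner `pAp`, and `0 ≤ a ≤ b`, then
`a` lies in the corner as well. -/
lemma corner_hereditary {A : Type*} [CStarAlgebra A] [PartialOrder A] [StarOrderedRing A]
    {p a b : A} (hp : star p = p) (hpp : p * p = p) (ha : 0 ≤ a) (hab : a ≤ b)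
    (hb : p * b * p = b) : p * a * p = a := by
  set q := 1 - p with hqdef
  have hq : star q = q := by simp [hqdef, hp]
  have hqaq0 : q * a * q = 0 := by
    have h1 : 0 ≤ q * a * q := by simpa [hq] using star_left_conjugate_nonneg ha q
    have h2 : q * a * q ≤ q * b * q := by simpa [hq] using star_left_conjugate_le_conjugate hab q
    have h3 : q * b * q = 0 := by
      rw [← hb]
      simp [hqdef, mul_sub, sub_mul, hpp, mul_assoc]
    exact le_antisymm (h2.trans_eq h3) h1
  set s := CFC.sqrt a with hsdef
  have hs : star s = s := (IsSelfAdjoint.of_nonneg (CFC.sqrt_nonneg a))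
  have hss : s * s = a := CFC.sqrt_mul_sqrt_self a ha
  have hsq : s * q = 0 := by
    rw [← CStarRing.star_mul_self_eq_zero_iff]
    calc star (s * q) * (s * q) = q * (s * s) * q := by
          rw [star_mul, hs, hq, mul_assoc, mul_assoc, ← mul_assoc s s q]
      _ = 0 := by rw [hss, hqaq0]
  have haq : a * q = 0 := by rw [← hss, mul_assoc, hsq, mul_zero]
  have hqa : q * a = 0 := by
    have := congrArg star haq
    simpa [star_mul, hq, ha.isSelfAdjoint.star_eq] using this
  have hap : a * p = a := by
    have : a * (1 - p) = 0 := haq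
    rw [mul_sub, mul_one, sub_eq_zero] at this
    exact this.symm
  have hpa : p * a = a := by
    have : (1 - p) * a = 0 := hqa
    rw [sub_mul, one_mul, sub_eq_zero] at this
    exact this.symm
  rw [hpa, hap]

/-- A complete transfer operator exists iff a non-degenerate transfer operator
exists and δ(A) is a hereditary subalgebra of A. -/
theorem complete_transfer_exists_iff {A : Type*} [CStarAlgebra A] [PartialOrder A]
    [StarOrderedRing A] (δ : A → A) (hδ : IsEndomorphism δ) :
    (∃ δs : A → A, IsTransferOperator δ δs ∧ ∀ a : A, δ (δs a) = δ 1 * a * δ 1) ↔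
      ((∃ δs : A → A, IsTransferOperator δ δs ∧ ∀ a : A, δ (δs (δ a)) = δ a) ∧
        (∀ a b : A, 0 ≤ a → a ≤ b → b ∈ Set.range δ → a ∈ Set.range δ)) := by
  obtain ⟨hlin, hmul, hstar⟩ := hδ
  set p := δ 1 with hpdef
  have hp : star p = p := by rw [hpdef, ← hstar, star_one]
  have hpp : p * p = p := by rw [hpdef, ← hmul, one_mul]
  have hpleft : ∀ a, p * δ a = δ a := fun a => by rw [hpdef, ← hmul, one_mul]
  have hpright : ∀ a, δ a * p = δ a := fun a => by rw [hpdef, ← hmul, mul_one]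
  constructor
  · rintro ⟨δs, hts, hcomp⟩
    refine ⟨⟨δs, hts, fun a => by rw [hcomp (δ a), hpleft, hpright]⟩, ?_⟩
    rintro a b ha hab ⟨c, rfl⟩
    have hbc : p * δ c * p = δ c := by rw [hpleft, hpright]
    have hkey : p * a * p = a := corner_hereditary hp hpp ha hab hbc
    exact ⟨δs a, by rw [hcomp a, hkey]⟩
  · rintro ⟨⟨δs, ⟨hcont, hl, hpos, htr⟩, hnd⟩, hher⟩
    -- the range of δ as a submodule
    have hrange_sub : ∀ x y : A, x ∈ Set.range δ → y ∈ Set.range δ → x - y ∈ Set.range δ := by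
      rintro x y ⟨u, rfl⟩ ⟨v, rfl⟩
      exact ⟨u - v, by rw [hlin.map_sub]⟩
    have hrange_add : ∀ x y : A, x ∈ Set.range δ → y ∈ Set.range δ → x + y ∈ Set.range δ := by
      rintro x y ⟨u, rfl⟩ ⟨v, rfl⟩
      exact ⟨u + v, by rw [hlin.map_add]⟩
    have hrange_smul : ∀ (c : ℂ) (x : A), x ∈ Set.range δ → c • x ∈ Set.range δ := by
      rintro c x ⟨u, rfl⟩
      exact ⟨c • u, by rw [hlin.map_smul]⟩
    -- `p * a * p` is in the range of δ for nonnegative a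
    have hcorner_pos : ∀ a : A, 0 ≤ a → p * a * p ∈ Set.range δ := by
      intro a ha
      have h1 : 0 ≤ p * a * p := by simpa [hp] using star_left_conjugate_nonneg ha p
      have h2 : p * a * p ≤ p * algebraMap ℝ A ‖a‖ * p := by
        simpa [hp] using star_left_conjugate_le_conjugate ha.isSelfAdjoint.le_algebraMap_norm_self p
      have h3 : p * algebraMap ℝ A ‖a‖ * p = δ ((‖a‖ : ℂ) • 1) := by
        rw [Algebra.algebraMap_eq_smul_one, hlin.map_smul]
        rw [mul_smul_comm, smul_mul_assoc, mul_one, hpp]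
        rw [← hpdef]
        norm_num [Complex.coe_smul]
      exact hher _ _ h1 (h2.trans_eq h3) ⟨_, rfl⟩
    -- `p * a * p` is in the range of δ for all a
    have hcorner : ∀ a : A, p * a * p ∈ Set.range δ := by
      have hsa : ∀ a : A, IsSelfAdjoint a → p * a * p ∈ Set.range δ := by
        intro a ha
        have hdecomp : a⁺ - a⁻ = a := CFC.posPart_sub_negPart a ha
        have h1 := hcorner_pos _ (CFC.posPart_nonneg a)
        have h2 := hcorner_pos _ (CFC.negPart_nonneg a)
        have : p * a⁺ * p - p * a⁻ * p = p * a * p := by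
          conv_rhs => rw [← hdecomp]
          noncomm_ring
        exact this ▸ hrange_sub _ _ h1 h2
      intro a
      have hdecomp : (realPart a : A) + Complex.I • (imaginaryPart a : A) = a :=
        realPart_add_I_smul_imaginaryPart a
      have h1 := hsa _ (realPart a).2
      have h2 := hsa _ (imaginaryPart a).2
      have : p * (realPart a : A) * p + Complex.I • (p * (imaginaryPart a : A) * p)
          = p * a * p := by
        conv_rhs => rw [← hdecomp]
        simp [mul_add, add_mul, mul_smul_comm, smul_mul_assoc]
      exact this ▸ hrange_add _ _ h1 (hrange_smul _ _ h2)
    -- the complete transfer operator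
    refine ⟨fun a => δs (p * a * p), ⟨?_, ?_, ?_, ?_⟩, ?_⟩
    · exact hcont.comp ((continuous_const.mul continuous_id).mul continuous_const)
    · constructor
      · intro x y
        rw [← hl.map_add]
        congr 1
        noncomm_ring
      · intro c x
        rw [← hl.map_smul]
        congr 1
        simp [mul_smul_comm, smul_mul_assoc]
    · intro a ha
      exact hpos _ (by simpa [hp] using star_left_conjugate_nonneg ha p)
    · intro a b
      show δs (p * (δ a * b) * p) = a * δs (p * b * p)
      have h1 : p * (δ a * b) * p = δ a * (b * p) := by
        rw [← mul_assoc, ← mul_assoc, hpleft, mul_assoc]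
      have h2 : p * b * p = δ 1 * (b * p) := by rw [← hpdef, mul_assoc]
      rw [h1, htr, h2, htr, one_mul]
    · intro a
      obtain ⟨c, hc⟩ := hcorner a
      show δ (δs (p * a * p)) = p * a * p
      rw [← hc, hnd]
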